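/- Let A, B be n×n real symmetric matrices. Then A and B strongly commute (i.e., there is a common orthonormal eigenbasis diagonalizing A with eigenvalues λ(A) in decreasing order and B with eigenvalues λ(B) in decreasing order, in the same order) if and only if λ(A+B) = λ(A) + λ(B), where λ(·) denotes the decreasingly ordered eigenvalue vector. -/

import Mathlib

open Finset

/-- Decreasing rearrangement of a vector in ℝⁿ. -/
noncomputable def dsort {n : ℕ} (u : Fin n → ℝ) : Fin n → ℝ :=
  u ∘ Tuple.sort (fun i => -u i)

/-- `Maj u v` : `u` is majorized by `v`. -/
def Maj {n : ℕ} (u v : Fin n → ℝ) : Prop :=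
  (∀ k : ℕ, ∑ i ∈ univ.filter (fun i : Fin n => (i : ℕ) < k), dsort u i ≤
      ∑ i ∈ univ.filter (fun i : Fin n => (i : ℕ) < k), dsort v i) ∧
  ∑ i, u i = ∑ i, v i

open Matrix

/-- Decreasingly ordered eigenvalue vector of a real symmetric matrix. -/
noncomputable def specVec {n : ℕ} {A : Matrix (Fin n) (Fin n) ℝ} (hA : A.IsHermitian) :
    Fin n → ℝ :=
  dsort hA.eigenvalues

/-- `A` and `B` strongly commute: a common orthonormal eigenbasis realizing both
decreasingly ordered spectra simultaneously. -/
def StrongCommute {n : ℕ} {A B : Matrix (Fin n) (Fin n) ℝ}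
    (hA : A.IsHermitian) (hB : B.IsHermitian) : Prop :=
  ∃ U : Matrix (Fin n) (Fin n) ℝ, U * Uᵀ = 1 ∧
    Uᵀ * A * U = Matrix.diagonal (specVec hA) ∧
    Uᵀ * B * U = Matrix.diagonal (specVec hB)


open Polynomial

variable {n : ℕ} {M : Matrix (Fin n) (Fin n) ℝ}
lemma dsort_antitone {n : ℕ} (u : Fin n → ℝ) : Antitone (dsort u) := by
  intro i j hij
  have := Tuple.monotone_sort (fun i => -u i) hij
  simpa [dsort] using this

lemma dsort_perm {n : ℕ} (u : Fin n → ℝ) : (List.ofFn (dsort u)).Perm (List.ofFn u) :=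
  Equiv.Perm.ofFn_comp_perm _ u

lemma antitone_eq_of_perm {n : ℕ} {u v : Fin n → ℝ} (hu : Antitone u) (hv : Antitone v)
    (h : (List.ofFn u).Perm (List.ofFn v)) : u = v := by
  have su : (List.ofFn u).Pairwise (· ≥ ·) := by
    rw [List.pairwise_ofFn]
    intro i j hij
    exact hu hij.le
  have sv : (List.ofFn v).Pairwise (· ≥ ·) := by
    rw [List.pairwise_ofFn]
    intro i j hij
    exact hv hij.le
  exact List.ofFn_injective (List.Perm.eq_of_pairwise' su sv h)

lemma dsort_eq_self {n : ℕ} {u : Fin n → ℝ} (hu : Antitone u) : dsort u = u :=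
  antitone_eq_of_perm (dsort_antitone u) hu (dsort_perm u)


variable {n : ℕ} {M : Matrix (Fin n) (Fin n) ℝ}

lemma charpoly_conj_orth (U M : Matrix (Fin n) (Fin n) ℝ) (hU : U * Uᵀ = 1) :
    (U * M * Uᵀ).charpoly = M.charpoly := by
  have hU' : Uᵀ * U = 1 := mul_eq_one_comm.mp hU
  have key : charmatrix (U * M * Uᵀ) =
      (U.map C) * charmatrix M * (Uᵀ.map C) := by
    have h1 : (U * M * Uᵀ).map (C : ℝ →+* ℝ[X]) = U.map C * M.map C * Uᵀ.map C := by
      rw [Matrix.map_mul, Matrix.map_mul]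
    have h2 : (U.map (C : ℝ →+* ℝ[X])) * (Uᵀ.map C) = 1 := by
      rw [← Matrix.map_mul, hU, Matrix.map_one _ (map_zero _) (map_one _)]
    rw [charmatrix, charmatrix, RingHom.mapMatrix_apply, RingHom.mapMatrix_apply, h1]
    rw [Matrix.mul_sub, Matrix.sub_mul]
    congr 1
    have h3 := (Matrix.scalar_commute (n := Fin n) (X : ℝ[X]) (fun r' => mul_comm X r') (U.map C)).eq
    rw [← h3, Matrix.mul_assoc, h2, Matrix.mul_one]
  rw [Matrix.charpoly, Matrix.charpoly, key, Matrix.det_mul, Matrix.det_mul,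
    mul_comm, ← mul_assoc, ← Matrix.det_mul, ← Matrix.map_mul, hU',
    Matrix.map_one _ (map_zero _) (map_one _), Matrix.det_one, one_mul]

lemma charpoly_eq_prod_of_conj {U M : Matrix (Fin n) (Fin n) ℝ} {d : Fin n → ℝ}
    (hU : U * Uᵀ = 1) (hd : Uᵀ * M * U = diagonal d) :
    M.charpoly = ∏ i, (X - C (d i)) := by
  have hU' : Uᵀ * U = 1 := mul_eq_one_comm.mp hU
  have hM : M = U * diagonal d * Uᵀ := by
    rw [← hd]
    calc M = (U * Uᵀ) * M * (U * Uᵀ) := by rw [hU, Matrix.one_mul, Matrix.mul_one]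
    _ = U * (Uᵀ * M * U) * Uᵀ := by noncomm_ring
  rw [hM, charpoly_conj_orth U _ hU,
    Matrix.charpoly_of_upperTriangular _ (Matrix.blockTriangular_diagonal d)]
  simp

lemma multiset_eq_of_charpoly {M : Matrix (Fin n) (Fin n) ℝ} {d e : Fin n → ℝ}
    (h1 : M.charpoly = ∏ i, (X - C (d i))) (h2 : M.charpoly = ∏ i, (X - C (e i))) :
    (List.ofFn d).Perm (List.ofFn e) := by
  have key : ∀ f : Fin n → ℝ, (∏ i, (X - C (f i))) =
      ((Multiset.map f Finset.univ.val).map (fun a => X - C a)).prod := by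
    intro f
    rw [Multiset.map_map]
    rfl
  have : (Multiset.map d Finset.univ.val) = (Multiset.map e Finset.univ.val) := by
    have := h1.symm.trans h2
    rw [key d, key e] at this
    have := congrArg Polynomial.roots this
    rwa [Polynomial.roots_multiset_prod_X_sub_C, Polynomial.roots_multiset_prod_X_sub_C] at this
  rw [← Multiset.coe_eq_coe]
  simpa [Fin.univ_val_map] using this

lemma real_herm_diag (hM : IsHermitian M) :
    (hM.eigenvectorUnitary : Matrix (Fin n) (Fin n) ℝ)ᵀ * M *
      (hM.eigenvectorUnitary : Matrix (Fin n) (Fin n) ℝ) = diagonal hM.eigenvalues := by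
  have := hM.conjStarAlgAut_star_eigenvectorUnitary
  rw [Unitary.conjStarAlgAut_star_apply, Matrix.star_eq_conjTranspose, Matrix.conjTranspose_eq_transpose_of_trivial] at this
  rw [this, RCLike.ofReal_real_eq_id, Function.id_comp]

lemma eigU_orth (hM : IsHermitian M) :
    (hM.eigenvectorUnitary : Matrix (Fin n) (Fin n) ℝ) *
      (hM.eigenvectorUnitary : Matrix (Fin n) (Fin n) ℝ)ᵀ = 1 := by
  have := (Matrix.mem_unitaryGroup_iff).mp hM.eigenvectorUnitary.2
  rwa [Matrix.star_eq_conjTranspose, Matrix.conjTranspose_eq_transpose_of_trivial] at this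

lemma charpoly_herm (hM : IsHermitian M) :
    M.charpoly = ∏ i, (X - C (hM.eigenvalues i)) :=
  charpoly_eq_prod_of_conj (eigU_orth hM) (real_herm_diag hM)

lemma key_specVec (hM : IsHermitian M) {U : Matrix (Fin n) (Fin n) ℝ} {d : Fin n → ℝ}
    (hU : U * Uᵀ = 1) (hd : Uᵀ * M * U = diagonal d) (hanti : Antitone d) :
    specVec hM = d := by
  have hperm : (List.ofFn hM.eigenvalues).Perm (List.ofFn d) :=
    multiset_eq_of_charpoly (charpoly_herm hM) (charpoly_eq_prod_of_conj hU hd)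
  exact antitone_eq_of_perm (dsort_antitone _) hanti ((dsort_perm _).trans hperm)

/-- permutation matrix -/
def permMat (σ : Equiv.Perm (Fin n)) : Matrix (Fin n) (Fin n) ℝ :=
  Matrix.of fun i j => if i = σ j then 1 else 0

lemma permMat_orth (σ : Equiv.Perm (Fin n)) : permMat σ * (permMat σ)ᵀ = 1 := by
  ext i k
  simp only [Matrix.mul_apply, permMat, Matrix.transpose_apply, Matrix.of_apply,
    ite_mul, one_mul, zero_mul]
  rw [Equiv.sum_comp σ (fun y => if i = y then (if k = y then (1:ℝ) else 0) else 0)]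
  simp [Finset.sum_ite_eq, Matrix.one_apply, eq_comm]

lemma permMat_conj_diag (σ : Equiv.Perm (Fin n)) (d : Fin n → ℝ) :
    (permMat σ)ᵀ * diagonal d * permMat σ = diagonal (d ∘ σ) := by
  ext i j
  simp only [Matrix.mul_apply, permMat, Matrix.transpose_apply, Matrix.of_apply,
    Matrix.diagonal_apply]
  simp only [ite_mul, zero_mul, one_mul, mul_ite, mul_zero, mul_one, Finset.sum_ite_eq',
    Finset.mem_univ, if_true, Finset.sum_ite_eq, EmbeddingLike.apply_eq_iff_eq,
    Function.comp_apply]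
  rcases eq_or_ne i j with h | h
  · subst h; simp
  · simp [h, h.symm]

lemma exists_diag (hM : IsHermitian M) :
    ∃ U : Matrix (Fin n) (Fin n) ℝ, U * Uᵀ = 1 ∧ Uᵀ * M * U = diagonal (specVec hM) := by
  set V := (hM.eigenvectorUnitary : Matrix (Fin n) (Fin n) ℝ) with hV
  set σ := Tuple.sort (fun i => -(hM.eigenvalues i)) with hσ
  refine ⟨V * permMat σ, ?_, ?_⟩
  · rw [Matrix.transpose_mul, Matrix.mul_assoc, ← Matrix.mul_assoc (permMat σ),
      permMat_orth, Matrix.one_mul, eigU_orth]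
  · rw [Matrix.transpose_mul]
    have : (permMat σ)ᵀ * Vᵀ * M * (V * permMat σ)
        = (permMat σ)ᵀ * (Vᵀ * M * V) * permMat σ := by noncomm_ring
    rw [this, real_herm_diag hM, permMat_conj_diag]
    rfl

lemma weighted_le (γ c : Fin n → ℝ) (hγ : Antitone γ) (h0 : ∀ j, 0 ≤ c j) (h1 : ∀ j, c j ≤ 1)
    (k : ℕ) (hsum : ∑ j, c j = ((univ.filter (fun i : Fin n => (i : ℕ) < k)).card : ℝ)) :
    ∑ j, c j * γ j ≤ ∑ j ∈ univ.filter (fun i : Fin n => (i : ℕ) < k), γ j := by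
  set S := univ.filter (fun i : Fin n => (i : ℕ) < k) with hS
  by_cases hk : k < n
  · set t := γ ⟨k, hk⟩ with ht
    have hsplit : ∑ j, c j * γ j = ∑ j ∈ S, c j * γ j + ∑ j ∈ Sᶜ, c j * γ j :=
      (Finset.sum_add_sum_compl S _).symm
    have hcS : ∑ j ∈ S, c j * γ j ≤ ∑ j ∈ S, (γ j + (c j - 1) * t) := by
      apply Finset.sum_le_sum
      intro j hj
      have hjk : (j : ℕ) < k := (Finset.mem_filter.mp hj).2
      have hγj : t ≤ γ j := hγ (by exact le_of_lt (by exact hjk : (j : ℕ) < (⟨k, hk⟩ : Fin n)))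
      have : (c j - 1) * γ j ≤ (c j - 1) * t :=
        mul_le_mul_of_nonpos_left hγj (by linarith [h1 j])
      nlinarith
    have hcSc : ∑ j ∈ Sᶜ, c j * γ j ≤ ∑ j ∈ Sᶜ, c j * t := by
      apply Finset.sum_le_sum
      intro j hj
      have hjk : ¬ (j : ℕ) < k := by
        simpa [hS] using hj
      have hγj : γ j ≤ t := hγ (by exact not_lt.mp hjk : (⟨k, hk⟩ : Fin n) ≤ j)
      exact mul_le_mul_of_nonneg_left hγj (h0 j)
    have hzero : (∑ j ∈ S, (c j - 1)) + ∑ j ∈ Sᶜ, c j = 0 := by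
      have : (∑ j ∈ S, (c j - 1)) + ∑ j ∈ Sᶜ, c j
          = (∑ j ∈ S, c j + ∑ j ∈ Sᶜ, c j) - S.card := by
        rw [Finset.sum_sub_distrib]
        simp
        ring
      rw [this, Finset.sum_add_sum_compl, hsum]
      ring
    calc ∑ j, c j * γ j ≤ ∑ j ∈ S, (γ j + (c j - 1) * t) + ∑ j ∈ Sᶜ, c j * t := by
          rw [hsplit]; exact add_le_add hcS hcSc
      _ = ∑ j ∈ S, γ j + ((∑ j ∈ S, (c j - 1)) + ∑ j ∈ Sᶜ, c j) * t := by
          rw [Finset.sum_add_distrib, ← Finset.sum_mul, ← Finset.sum_mul]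
          ring
      _ = ∑ j ∈ S, γ j := by rw [hzero]; ring
  · have hSuniv : S = univ := by
      ext i
      simp only [hS, Finset.mem_filter, Finset.mem_univ, true_and, iff_true]
      exact lt_of_lt_of_le i.isLt (not_lt.mp hk)
    have hc1 : ∀ j, c j = 1 := by
      have hzero : ∑ j, (1 - c j) = 0 := by
        rw [Finset.sum_sub_distrib, hsum, hSuniv]
        simp
      intro j
      have := (Finset.sum_eq_zero_iff_of_nonneg (fun i _ => by linarith [h1 i])).mp hzero j
        (Finset.mem_univ j)
      linarith
    rw [hSuniv]
    apply le_of_eq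
    apply Finset.sum_congr rfl
    intro j _
    rw [hc1 j, one_mul]

lemma diag_partial_le {U : Matrix (Fin n) (Fin n) ℝ} {γ : Fin n → ℝ}
    (hU : U * Uᵀ = 1) (hγ : Antitone γ) (k : ℕ) :
    ∑ i ∈ univ.filter (fun i : Fin n => (i : ℕ) < k), (U * diagonal γ * Uᵀ) i i ≤
      ∑ i ∈ univ.filter (fun i : Fin n => (i : ℕ) < k), γ i := by
  have hU' : Uᵀ * U = 1 := mul_eq_one_comm.mp hU
  set S := univ.filter (fun i : Fin n => (i : ℕ) < k) with hS
  set c := fun j => ∑ i ∈ S, (U i j)^2 with hc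
  have hentry : ∀ i, (U * diagonal γ * Uᵀ) i i = ∑ j, (U i j)^2 * γ j := by
    intro i
    rw [Matrix.mul_apply]
    apply Finset.sum_congr rfl
    intro j _
    rw [Matrix.mul_diagonal, Matrix.transpose_apply]
    ring
  have hLHS : ∑ i ∈ S, (U * diagonal γ * Uᵀ) i i = ∑ j, c j * γ j := by
    simp_rw [hentry]
    rw [Finset.sum_comm]
    apply Finset.sum_congr rfl
    intro j _
    rw [hc, Finset.sum_mul]
  rw [hLHS]
  apply weighted_le γ c hγ
  · intro j
    exact Finset.sum_nonneg fun i _ => sq_nonneg _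
  · intro j
    have h1 : ∑ i, (U i j)^2 = 1 := by
      have : (Uᵀ * U) j j = 1 := by rw [hU']; simp
      rw [Matrix.mul_apply] at this
      rw [← this]
      apply Finset.sum_congr rfl
      intro i _
      rw [Matrix.transpose_apply]
      ring
    rw [← h1]
    exact Finset.sum_le_sum_of_subset_of_nonneg (Finset.subset_univ S)
      (fun i _ _ => sq_nonneg _)
  · rw [Finset.sum_comm]
    have : ∀ i, ∑ j, (U i j)^2 = 1 := by
      intro i
      have : (U * Uᵀ) i i = 1 := by rw [hU]; simp
      rw [Matrix.mul_apply] at this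
      rw [← this]
      apply Finset.sum_congr rfl
      intro j _
      rw [Matrix.transpose_apply]
      ring
    simp_rw [this]
    simp
    rfl

lemma conj_repr {U A : Matrix (Fin n) (Fin n) ℝ} (hU : U * Uᵀ = 1) (hA : A.IsHermitian) :
    ∃ W : Matrix (Fin n) (Fin n) ℝ, W * Wᵀ = 1 ∧
      Uᵀ * A * U = W * diagonal (specVec hA) * Wᵀ := by
  obtain ⟨V, hV, hVd⟩ := exists_diag hA
  have hV' : Vᵀ * V = 1 := mul_eq_one_comm.mp hV
  have hU' : Uᵀ * U = 1 := mul_eq_one_comm.mp hU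
  refine ⟨Uᵀ * V, ?_, ?_⟩
  · rw [Matrix.transpose_mul, Matrix.transpose_transpose, Matrix.mul_assoc,
      ← Matrix.mul_assoc V, hV, Matrix.one_mul, hU']
  · have hAeq : A = V * diagonal (specVec hA) * Vᵀ := by
      rw [← hVd]
      calc A = (V * Vᵀ) * A * (V * Vᵀ) := by rw [hV, Matrix.one_mul, Matrix.mul_one]
        _ = V * (Vᵀ * A * V) * Vᵀ := by noncomm_ring
    calc Uᵀ * A * U = Uᵀ * (V * diagonal (specVec hA) * Vᵀ) * U := by rw [← hAeq]
      _ = Uᵀ * V * diagonal (specVec hA) * (Uᵀ * V)ᵀ := by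
          rw [Matrix.transpose_mul, Matrix.transpose_transpose]
          noncomm_ring

lemma sq_sum {W : Matrix (Fin n) (Fin n) ℝ} (hW : W * Wᵀ = 1) (γ : Fin n → ℝ) :
    ∑ i, ∑ j, ((W * diagonal γ * Wᵀ) i j)^2 = ∑ i, (γ i)^2 := by
  have hW' : Wᵀ * W = 1 := mul_eq_one_comm.mp hW
  set D := W * diagonal γ * Wᵀ with hD
  have hDsymm : ∀ i j, D j i = D i j := by
    intro i j
    have : Dᵀ = D := by
      rw [hD, Matrix.transpose_mul, Matrix.transpose_mul, Matrix.transpose_transpose,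
        Matrix.diagonal_transpose, Matrix.mul_assoc]
    calc D j i = Dᵀ i j := rfl
      _ = D i j := by rw [this]
  have hDD : D * D = W * diagonal (fun i => (γ i)^2) * Wᵀ := by
    rw [hD]
    have : W * diagonal γ * Wᵀ * (W * diagonal γ * Wᵀ)
        = W * (diagonal γ * (Wᵀ * W) * diagonal γ) * Wᵀ := by noncomm_ring
    rw [this, hW', Matrix.mul_one, Matrix.diagonal_mul_diagonal]
    congr 1
    congr 1
    funext i
    ring
  have htr : (D * D).trace = ∑ i, (γ i)^2 := by
    rw [hDD, Matrix.trace_mul_cycle, hW', Matrix.one_mul, Matrix.trace_diagonal]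
  rw [← htr, Matrix.trace]
  apply Finset.sum_congr rfl
  intro i _
  rw [Matrix.diag, Matrix.mul_apply]
  apply Finset.sum_congr rfl
  intro j _
  rw [hDsymm i j]
  ring

theorem stmt9 {n : ℕ} {A B : Matrix (Fin n) (Fin n) ℝ}
    (hA : A.IsHermitian) (hB : B.IsHermitian) :
    StrongCommute hA hB ↔ specVec (hA.add hB) = specVec hA + specVec hB := by
  set α := specVec hA with hαdef
  set β := specVec hB with hβdef
  have hα : Antitone α := dsort_antitone _
  have hβ : Antitone β := dsort_antitone _
  have hαβ : Antitone (α + β) := fun i j hij => add_le_add (hα hij) (hβ hij)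
  constructor
  · rintro ⟨U, hU, hAd, hBd⟩
    have hsum : Uᵀ * (A + B) * U = diagonal (α + β) := by
      rw [Matrix.mul_add, Matrix.add_mul, hAd, hBd, Matrix.diagonal_add]
      rfl
    exact key_specVec (hA.add hB) hU hsum hαβ
  · intro h
    obtain ⟨U, hU, hMd⟩ := exists_diag (hA.add hB)
    rw [h] at hMd
    obtain ⟨W, hW, hWA⟩ := conj_repr hU hA
    obtain ⟨Z, hZ, hZB⟩ := conj_repr hU hB
    have hAk : ∀ k : ℕ, ∑ i ∈ univ.filter (fun i : Fin n => (i : ℕ) < k), (Uᵀ * A * U) i i ≤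
        ∑ i ∈ univ.filter (fun i : Fin n => (i : ℕ) < k), α i := by
      intro k
      rw [hWA]
      exact diag_partial_le hW hα k
    have hBk : ∀ k : ℕ, ∑ i ∈ univ.filter (fun i : Fin n => (i : ℕ) < k), (Uᵀ * B * U) i i ≤
        ∑ i ∈ univ.filter (fun i : Fin n => (i : ℕ) < k), β i := by
      intro k
      rw [hZB]
      exact diag_partial_le hZ hβ k
    have hentry_sum : ∀ i, (Uᵀ * A * U) i i + (Uᵀ * B * U) i i = α i + β i := by
      intro i
      have : (Uᵀ * A * U) + (Uᵀ * B * U) = diagonal (α + β) := by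
        rw [← hMd]
        noncomm_ring
      have := congrFun (congrFun this i) i
      simpa [Matrix.diagonal_apply_eq] using this
    have hAEq : ∀ k : ℕ, ∑ i ∈ univ.filter (fun i : Fin n => (i : ℕ) < k), (Uᵀ * A * U) i i =
        ∑ i ∈ univ.filter (fun i : Fin n => (i : ℕ) < k), α i := by
      intro k
      have hs : ∑ i ∈ univ.filter (fun i : Fin n => (i : ℕ) < k),
            ((Uᵀ * A * U) i i + (Uᵀ * B * U) i i) =
          ∑ i ∈ univ.filter (fun i : Fin n => (i : ℕ) < k), (α i + β i) :=
        Finset.sum_congr rfl fun i _ => hentry_sum i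
      rw [Finset.sum_add_distrib, Finset.sum_add_distrib] at hs
      have := hAk k
      have := hBk k
      linarith
    have hdiagA : ∀ i : Fin n, (Uᵀ * A * U) i i = α i := by
      intro i
      have hins : univ.filter (fun j : Fin n => (j : ℕ) < (i : ℕ) + 1) =
          insert i (univ.filter (fun j : Fin n => (j : ℕ) < (i : ℕ))) := by
        ext j
        simp only [Finset.mem_filter, Finset.mem_univ, true_and, Finset.mem_insert,
          Nat.lt_succ_iff_lt_or_eq, Fin.ext_iff]
        tauto
      have hni : i ∉ univ.filter (fun j : Fin n => (j : ℕ) < (i : ℕ)) := by simp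
      have h1 := hAEq ((i : ℕ) + 1)
      have h2 := hAEq (i : ℕ)
      rw [hins, Finset.sum_insert hni, Finset.sum_insert hni] at h1
      linarith
    have hoffA : Uᵀ * A * U = diagonal α := by
      have hsq : ∑ i, ∑ j, ((Uᵀ * A * U) i j)^2 = ∑ i, (α i)^2 := by
        rw [hWA]
        exact sq_sum hW α
      have hzero : ∑ i, ∑ j ∈ univ.erase i, ((Uᵀ * A * U) i j)^2 = 0 := by
        have hsplit : ∀ i : Fin n, ∑ j, ((Uᵀ * A * U) i j)^2 =
            ((Uᵀ * A * U) i i)^2 + ∑ j ∈ univ.erase i, ((Uᵀ * A * U) i j)^2 :=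
          fun i => (Finset.add_sum_erase univ _ (Finset.mem_univ i)).symm
        have := hsq
        simp_rw [hsplit, Finset.sum_add_distrib] at this
        have hd : ∑ i, ((Uᵀ * A * U) i i)^2 = ∑ i, (α i)^2 :=
          Finset.sum_congr rfl fun i _ => by rw [hdiagA i]
        linarith
      have hz : ∀ i j : Fin n, j ≠ i → (Uᵀ * A * U) i j = 0 := by
        intro i j hij
        have h1 := (Finset.sum_eq_zero_iff_of_nonneg
          (fun i _ => Finset.sum_nonneg fun j _ => sq_nonneg _)).mp hzero i (Finset.mem_univ i)
        have h2 := (Finset.sum_eq_zero_iff_of_nonneg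
          (fun j _ => sq_nonneg _)).mp h1 j (Finset.mem_erase.mpr ⟨hij, Finset.mem_univ j⟩)
        exact pow_eq_zero_iff two_ne_zero |>.mp h2
      ext i j
      rcases eq_or_ne i j with rfl | hij
      · rw [Matrix.diagonal_apply_eq]
        exact hdiagA i
      · rw [Matrix.diagonal_apply_ne _ hij]
        exact hz i j (Ne.symm hij)
    have hBEq : ∀ k : ℕ, ∑ i ∈ univ.filter (fun i : Fin n => (i : ℕ) < k), (Uᵀ * B * U) i i =
        ∑ i ∈ univ.filter (fun i : Fin n => (i : ℕ) < k), β i := by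
      intro k
      have hs : ∑ i ∈ univ.filter (fun i : Fin n => (i : ℕ) < k),
            ((Uᵀ * A * U) i i + (Uᵀ * B * U) i i) =
          ∑ i ∈ univ.filter (fun i : Fin n => (i : ℕ) < k), (α i + β i) :=
        Finset.sum_congr rfl fun i _ => hentry_sum i
      rw [Finset.sum_add_distrib, Finset.sum_add_distrib] at hs
      have := hAk k
      have := hBk k
      linarith
    have hdiagB : ∀ i : Fin n, (Uᵀ * B * U) i i = β i := by
      intro i
      have hins : univ.filter (fun j : Fin n => (j : ℕ) < (i : ℕ) + 1) =
          insert i (univ.filter (fun j : Fin n => (j : ℕ) < (i : ℕ))) := by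
        ext j
        simp only [Finset.mem_filter, Finset.mem_univ, true_and, Finset.mem_insert,
          Nat.lt_succ_iff_lt_or_eq, Fin.ext_iff]
        tauto
      have hni : i ∉ univ.filter (fun j : Fin n => (j : ℕ) < (i : ℕ)) := by simp
      have h1 := hBEq ((i : ℕ) + 1)
      have h2 := hBEq (i : ℕ)
      rw [hins, Finset.sum_insert hni, Finset.sum_insert hni] at h1
      linarith
    have hoffB : Uᵀ * B * U = diagonal β := by
      have hsq : ∑ i, ∑ j, ((Uᵀ * B * U) i j)^2 = ∑ i, (β i)^2 := by
        rw [hZB]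
        exact sq_sum hZ β
      have hzero : ∑ i, ∑ j ∈ univ.erase i, ((Uᵀ * B * U) i j)^2 = 0 := by
        have hsplit : ∀ i : Fin n, ∑ j, ((Uᵀ * B * U) i j)^2 =
            ((Uᵀ * B * U) i i)^2 + ∑ j ∈ univ.erase i, ((Uᵀ * B * U) i j)^2 :=
          fun i => (Finset.add_sum_erase univ _ (Finset.mem_univ i)).symm
        have := hsq
        simp_rw [hsplit, Finset.sum_add_distrib] at this
        have hd : ∑ i, ((Uᵀ * B * U) i i)^2 = ∑ i, (β i)^2 :=
          Finset.sum_congr rfl fun i _ => by rw [hdiagB i]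
        linarith
      have hz : ∀ i j : Fin n, j ≠ i → (Uᵀ * B * U) i j = 0 := by
        intro i j hij
        have h1 := (Finset.sum_eq_zero_iff_of_nonneg
          (fun i _ => Finset.sum_nonneg fun j _ => sq_nonneg _)).mp hzero i (Finset.mem_univ i)
        have h2 := (Finset.sum_eq_zero_iff_of_nonneg
          (fun j _ => sq_nonneg _)).mp h1 j (Finset.mem_erase.mpr ⟨hij, Finset.mem_univ j⟩)
        exact pow_eq_zero_iff two_ne_zero |>.mp h2
      ext i j
      rcases eq_or_ne i j with rfl | hij
      · rw [Matrix.diagonal_apply_eq]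
        exact hdiagB i
      · rw [Matrix.diagonal_apply_ne _ hij]
        exact hz i j (Ne.symm hij)
    exact ⟨U, hU, hoffA, hoffB⟩
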